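/- arXiv:1911.08710 — 2 statements merged into one kernel-verified Lean document; each statement's English description precedes it below -/
import Mathlib

section
/- Let M be a d×d Hermitian matrix, x ∈ ℂ^d nonzero, τ2, τ3, δ reals with τ3 > 0 and ‖M − τ2‖x‖²I − τ3 x x*‖ ≤ δ‖x‖². Let z̃ be a unit eigenvector of M corresponding to its largest eigenvalue λ. Then |z̃* x|² / ‖x‖² ≥ 1 − 2δ/τ3. -/
open Matrix

lemma eig_apply {d : ℕ} (M : Matrix (Fin d) (Fin d) ℂ) (hM : M.IsHermitian) (i : Fin d) :
    Matrix.toEuclideanCLM (𝕜 := ℂ) M (hM.eigenvectorBasis i) = (hM.eigenvalues i : ℂ) • hM.eigenvectorBasis i := by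
  ext j
  have h := congrFun (Matrix.ofLp_toEuclideanCLM (𝕜 := ℂ) M (hM.eigenvectorBasis i)) j
  have h2 := congrFun (hM.mulVec_eigenvectorBasis i) j
  simpa [h2] using h

lemma rayleigh_aux {d : ℕ} (hd : 0 < d) (M : Matrix (Fin d) (Fin d) ℂ) (hM : M.IsHermitian)
    (v : EuclideanSpace ℂ (Fin d)) :
    Complex.re (inner ℂ v (Matrix.toEuclideanCLM (𝕜 := ℂ) M v) : ℂ)
      ≤ (⨆ i, hM.eigenvalues i) * ‖v‖ ^ 2 := by
  haveI : Nonempty (Fin d) := Fin.pos_iff_nonempty.mp hd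
  set b := hM.eigenvectorBasis with hb
  set A := Matrix.toEuclideanCLM (𝕜 := ℂ) M with hA
  have hsa : IsSelfAdjoint A := by
    have h1 : Matrix.toEuclideanCLM (𝕜 := ℂ) (star M) = star A := map_star _ M
    show star A = A
    rw [← h1, hA]
    exact congrArg _ hM
  have hbi : ∀ i, (inner ℂ (b i) (A v) : ℂ) = (hM.eigenvalues i : ℂ) * inner ℂ (b i) v := by
    intro i
    have hsym := hsa.isSymmetric (b i) v
    simp only [ContinuousLinearMap.coe_coe] at hsym
    rw [← hsym, show A (b i) = (hM.eigenvalues i : ℂ) • b i from eig_apply M hM i, inner_smul_left]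
    simp
  have key : (inner ℂ v (A v) : ℂ) = ∑ i, ((hM.eigenvalues i : ℂ)) * (‖(inner ℂ (b i) v : ℂ)‖ ^ 2 : ℝ) := by
    rw [← b.sum_inner_mul_inner v (A v)]
    refine Finset.sum_congr rfl fun i _ => ?_
    rw [hbi i, ← inner_conj_symm v (b i)]
    rw [show ((‖(inner ℂ (b i) v : ℂ)‖ ^ 2 : ℝ) : ℂ) = (starRingEnd ℂ) (inner ℂ (b i) v) * inner ℂ (b i) v by
      rw [Complex.conj_mul']; push_cast; ring]
    ring
  have parseval : ∑ i, ‖(inner ℂ (b i) v : ℂ)‖ ^ 2 = ‖v‖ ^ 2 := by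
    have := b.sum_inner_mul_inner v v
    have h2 : (inner ℂ v v : ℂ) = (‖v‖ ^ 2 : ℝ) := by
      rw [inner_self_eq_norm_sq_to_K]; norm_cast
    rw [h2] at this
    have h3 := congrArg Complex.re this
    rw [Complex.re_sum] at h3
    rw [show (((‖v‖ ^ 2 : ℝ)) : ℂ).re = ‖v‖ ^ 2 from Complex.ofReal_re _] at h3
    rw [← h3]
    refine Finset.sum_congr rfl fun i _ => ?_
    rw [← inner_conj_symm v (b i), Complex.conj_mul']
    rw [← Complex.ofReal_pow, Complex.ofReal_re]
  rw [key]
  have : Complex.re (∑ i, ((hM.eigenvalues i : ℂ)) * (‖(inner ℂ (b i) v : ℂ)‖ ^ 2 : ℝ))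
      = ∑ i, hM.eigenvalues i * ‖(inner ℂ (b i) v : ℂ)‖ ^ 2 := by
    simp only [Complex.re_sum]
    refine Finset.sum_congr rfl fun i _ => ?_
    norm_cast
  rw [this, ← parseval, Finset.mul_sum]
  refine Finset.sum_le_sum fun i _ => ?_
  have hle : hM.eigenvalues i ≤ ⨆ j, hM.eigenvalues j :=
    le_ciSup (Set.Finite.bddAbove (Set.finite_range _)) i
  nlinarith [sq_nonneg ‖(inner ℂ (b i) v : ℂ)‖]

set_option synthInstance.maxHeartbeats 1000000 in

/-- under the operator-norm bound, a unit top eigenvector `z` of `M`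
satisfies `|z* x|²/‖x‖² ≥ 1 − 2δ/τ3`. -/
theorem stmt_9 (d : ℕ) (hd : 0 < d) (M : Matrix (Fin d) (Fin d) ℂ)
    (hM : M.IsHermitian) (x : EuclideanSpace ℂ (Fin d)) (hx : x ≠ 0)
    (τ2 τ3 δ : ℝ) (hτ3 : 0 < τ3)
    (hnorm : ‖Matrix.toEuclideanCLM (𝕜 := ℂ)
        (M - ((τ2 * ‖x‖ ^ 2 : ℝ) : ℂ) • (1 : Matrix (Fin d) (Fin d) ℂ)
          - (τ3 : ℂ) • vecMulVec (fun i => x i) (star fun i => x i))‖ ≤ δ * ‖x‖ ^ 2)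
    (lam : ℝ) (hlam : lam = ⨆ i, hM.eigenvalues i)
    (z : EuclideanSpace ℂ (Fin d)) (hz : ‖z‖ = 1)
    (heig : Matrix.toEuclideanCLM (𝕜 := ℂ) M z = (lam : ℂ) • z) :
    1 - 2 * δ / τ3 ≤ ‖(inner ℂ z x : ℂ)‖ ^ 2 / ‖x‖ ^ 2 := by
  have hxpos : (0:ℝ) < ‖x‖ := norm_pos_iff.mpr hx
  have hn2pos : (0:ℝ) < ‖x‖ ^ 2 := by positivity
  set A := Matrix.toEuclideanCLM (𝕜 := ℂ) M with hA
  set V := vecMulVec (fun i => x i) (star fun i => x i) with hV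
  set P := Matrix.toEuclideanCLM (𝕜 := ℂ) V with hP
  set B := Matrix.toEuclideanCLM (𝕜 := ℂ)
      (M - ((τ2 * ‖x‖ ^ 2 : ℝ) : ℂ) • (1 : Matrix (Fin d) (Fin d) ℂ) - (τ3 : ℂ) • V) with hB
  -- P acts as v ↦ ⟪x, v⟫ • x
  have hPapply : ∀ v : EuclideanSpace ℂ (Fin d), P v = (inner ℂ x v : ℂ) • x := by
    intro v
    ext j
    have h := congrFun (Matrix.ofLp_toEuclideanCLM (𝕜 := ℂ) V v) j
    rw [show (P v) j = (V *ᵥ (WithLp.ofLp v)) j from h]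
    rw [show (V *ᵥ (WithLp.ofLp v)) j = ∑ k, V j k * v k from rfl]
    simp only [hV, Matrix.vecMulVec_apply, PiLp.smul_apply,
      PiLp.inner_apply, RCLike.inner_apply, smul_eq_mul, Pi.star_apply]
    rw [Finset.sum_mul]
    refine Finset.sum_congr rfl fun k _ => ?_
    rw [show (star (x k) : ℂ) = (starRingEnd ℂ) (x k) from rfl]
    ring
  -- B = A - c•id - τ3•P
  have hBapply : ∀ v : EuclideanSpace ℂ (Fin d),
      B v = A v - ((τ2 * ‖x‖ ^ 2 : ℝ) : ℂ) • v - (τ3 : ℂ) • P v := by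
    intro v
    rw [hB, map_sub, map_sub, _root_.map_smul, _root_.map_smul, _root_.map_one]
    simp [hA, hP]
  have hBz : ‖(inner ℂ z (B z) : ℂ)‖ ≤ δ * ‖x‖ ^ 2 := by
    calc ‖(inner ℂ z (B z) : ℂ)‖ ≤ ‖z‖ * ‖B z‖ := norm_inner_le_norm z (B z)
      _ ≤ ‖z‖ * (‖B‖ * ‖z‖) := by
          gcongr
          exact B.le_opNorm z
      _ = ‖B‖ := by rw [hz]; ring
      _ ≤ δ * ‖x‖ ^ 2 := hnorm
  set K : ℝ := ‖(inner ℂ z x : ℂ)‖ ^ 2 with hK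
  have hinnerz : (inner ℂ z (B z) : ℂ) = ((lam - τ2 * ‖x‖ ^ 2 - τ3 * K : ℝ) : ℂ) := by
    rw [hBapply, inner_sub_right, inner_sub_right, inner_smul_right, inner_smul_right,
      hPapply, inner_smul_right]
    rw [show A z = (lam : ℂ) • z from heig, inner_smul_right]
    have h1 : (inner ℂ z z : ℂ) = 1 := by
      rw [inner_self_eq_norm_sq_to_K, hz]; norm_num
    have h2 : (inner ℂ z x : ℂ) * inner ℂ x z = ((K : ℝ) : ℂ) := by
      rw [← inner_conj_symm x z, Complex.mul_conj', hK]
      push_cast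
      ring
    rw [h1, mul_comm ((inner ℂ x z : ℂ)) ((inner ℂ z x : ℂ)), h2]
    push_cast
    ring
  -- step 1 real inequality
  have step1 : |lam - τ2 * ‖x‖ ^ 2 - τ3 * K| ≤ δ * ‖x‖ ^ 2 := by
    have := hBz
    rw [hinnerz, Complex.norm_real] at this
    exact this
  -- step 2 : Rayleigh with x
  have hBx : ‖(inner ℂ x (B x) : ℂ)‖ ≤ δ * ‖x‖ ^ 2 * ‖x‖ ^ 2 := by
    calc ‖(inner ℂ x (B x) : ℂ)‖ ≤ ‖x‖ * ‖B x‖ := norm_inner_le_norm x (B x)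
      _ ≤ ‖x‖ * (‖B‖ * ‖x‖) := by gcongr; exact B.le_opNorm x
      _ = ‖B‖ * ‖x‖ ^ 2 := by ring
      _ ≤ (δ * ‖x‖ ^ 2) * ‖x‖ ^ 2 := by gcongr
  have hxx : (inner ℂ x x : ℂ) = ((‖x‖ ^ 2 : ℝ) : ℂ) := by
    rw [inner_self_eq_norm_sq_to_K]; norm_cast
  have hinnerx : (inner ℂ x (B x) : ℂ)
      = (inner ℂ x (A x) : ℂ) - ((τ2 * ‖x‖ ^ 2 + τ3 * ‖x‖ ^ 2) * ‖x‖ ^ 2 : ℝ) := by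
    rw [hBapply, inner_sub_right, inner_sub_right, inner_smul_right, inner_smul_right,
      hPapply, inner_smul_right, hxx]
    push_cast
    ring
  have hray : Complex.re (inner ℂ x (A x) : ℂ) ≤ lam * ‖x‖ ^ 2 := by
    rw [hlam]; exact rayleigh_aux hd M hM x
  have step2 : (τ2 + τ3 - δ) * ‖x‖ ^ 2 ≤ lam := by
    have hre : Complex.re (inner ℂ x (B x) : ℂ)
        = Complex.re (inner ℂ x (A x) : ℂ) - (τ2 * ‖x‖ ^ 2 + τ3 * ‖x‖ ^ 2) * ‖x‖ ^ 2 := by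
      rw [hinnerx, Complex.sub_re, Complex.ofReal_re]
    have habs : |Complex.re (inner ℂ x (B x) : ℂ)| ≤ δ * ‖x‖ ^ 2 * ‖x‖ ^ 2 :=
      le_trans (Complex.abs_re_le_norm _) hBx
    have h5 := neg_le_of_abs_le habs
    rw [hre] at h5
    nlinarith
  -- combine
  have h6 := le_of_abs_le step1
  clear_value K A V P B
  clear hBapply hPapply hBz hinnerz hinnerx hBx hxx hray hnorm hB heig hA hV hP step1 hK hlam hM hx
  have hτ3K : (τ3 - 2 * δ) * ‖x‖ ^ 2 ≤ τ3 * K := by nlinarith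
  rw [le_div_iff₀ hn2pos]
  calc (1 - 2 * δ / τ3) * ‖x‖ ^ 2 = ((τ3 - 2*δ) * ‖x‖ ^ 2) / τ3 := by
        field_simp
    _ ≤ (τ3 * K) / τ3 := (div_le_div_iff_of_pos_right hτ3).mpr hτ3K
    _ = K := mul_div_cancel_left₀ K (ne_of_gt hτ3)
end

section
/- Let E: ℂ^d → ℝ be differentiable (in the Wirtinger sense) and suppose that at a point z there exist constants β' > 0 and R > 0 with Re(⟨∇E(z), z − x e^{iθ(z)}⟩) ≥ (β'/8)·dist²(z,x) + (1/R)·‖∇E(z)‖². Then for any step size 0 < ξ ≤ 2/R, the gradient step z⁺ = z − ξ∇E(z) satisfies dist²(z⁺, x) ≤ (1 − ξβ'/4)·dist²(z, x). -/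
/-- one step of gradient descent contracts the distance to `x`
under the regularity (curvature + smoothness) condition at `z`. -/
theorem stmt_16 (d : ℕ) (x z g : EuclideanSpace ℂ (Fin d))
    (β' R : ℝ) (hβ' : 0 < β') (hR : 0 < R)
    (θz : ℝ)
    (hθz : ∀ θ' : ℝ, ‖z - Complex.exp (θz * Complex.I) • x‖ ≤
      ‖z - Complex.exp (θ' * Complex.I) • x‖)
    (hreg : (β' / 8) * ‖z - Complex.exp (θz * Complex.I) • x‖ ^ 2
        + (1 / R) * ‖g‖ ^ 2 ≤
      (inner ℂ g (z - Complex.exp (θz * Complex.I) • x) : ℂ).re)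
    (ξ : ℝ) (hξ0 : 0 < ξ) (hξ : ξ ≤ 2 / R) :
    (⨅ θ : ℝ, ‖(z - ξ • g) - Complex.exp (θ * Complex.I) • x‖ ^ 2) ≤
      (1 - ξ * β' / 4) * ‖z - Complex.exp (θz * Complex.I) • x‖ ^ 2 := by
  set v := z - Complex.exp (θz * Complex.I) • x with hv
  have hle : (⨅ θ : ℝ, ‖(z - ξ • g) - Complex.exp (θ * Complex.I) • x‖ ^ 2)
      ≤ ‖(z - ξ • g) - Complex.exp (θz * Complex.I) • x‖ ^ 2 := by
    refine ciInf_le ⟨0, ?_⟩ θz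
    rintro y ⟨θ, rfl⟩
    positivity
  refine hle.trans ?_
  have hrw : (z - ξ • g) - Complex.exp (θz * Complex.I) • x = v - ξ • g := by
    rw [hv]; abel
  rw [hrw]
  have hexp : ‖v - ξ • g‖ ^ 2 = ‖v‖ ^ 2 - 2 * ξ * (inner ℂ g v : ℂ).re + ξ ^ 2 * ‖g‖ ^ 2 := by
    have h := @norm_sub_sq ℂ _ _ _ _ v (ξ • g)
    have h1 : RCLike.re (inner ℂ v (ξ • g) : ℂ) = ξ * (inner ℂ g v : ℂ).re := by
      rw [← algebraMap_smul ℂ ξ g, RCLike.algebraMap_eq_ofReal, inner_smul_real_right,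
        RCLike.smul_re, ← inner_conj_symm g v, Complex.conj_re]
      rfl
    have h3 : ‖ξ • g‖ ^ 2 = ξ ^ 2 * ‖g‖ ^ 2 := by
      rw [norm_smul]; simp [mul_pow, abs_sq]
    rw [h, h1, h3]; ring
  rw [hexp]
  set c := (1 : ℝ) / R with hc
  have hc0 : 0 < c := by positivity
  have h2R : 2 / R = 2 * c := by rw [hc]; ring
  rw [h2R] at hξ
  have h2 : 2 * ξ * ((β' / 8) * ‖v‖ ^ 2 + c * ‖g‖ ^ 2) ≤
      2 * ξ * (inner ℂ g v : ℂ).re :=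
    mul_le_mul_of_nonneg_left hreg (by positivity)
  have hneg : ξ * (ξ - 2 * c) * ‖g‖ ^ 2 ≤ 0 := by
    have h1 : ξ * (ξ - 2 * c) ≤ 0 :=
      mul_nonpos_of_nonneg_of_nonpos hξ0.le (by linarith)
    exact mul_nonpos_of_nonpos_of_nonneg h1 (by positivity)
  nlinarith [h2, hneg]
end
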